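/- arXiv:2208.05714 — 2 statements merged into one kernel-verified Lean document; each statement's English description precedes it below -/
import Mathlib

section
/- The integral over p = {w ∈ ℝ⁴ : 0 ≤ w₄ ≤ w₁, 0 ≤ w₃ ≤ w₂, 0 ≤ w₂ ≤ w₁, 0 ≤ w₁ ≤ 1} of the function f(w) = 1/(w₁²+w₂²+w₃²+w₄²) equals (1/2)·∫₀¹∫₀¹∫₀¹ η₁/(1+η₁²+(η₁η₂)²+η₃²) dη₃ dη₂ dη₁; in particular the singular integral over p of f is finite. -/
open MeasureTheory

/-- The region `p = {w ∈ ℝ⁴ : 0 ≤ w₄ ≤ w₁, 0 ≤ w₃ ≤ w₂, 0 ≤ w₂ ≤ w₁, 0 ≤ w₁ ≤ 1}`. -/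
def duffyRegionP : Set (Fin 4 → ℝ) :=
  {w | (0 ≤ w 3 ∧ w 3 ≤ w 0) ∧ (0 ≤ w 2 ∧ w 2 ≤ w 1) ∧
    (0 ≤ w 1 ∧ w 1 ≤ w 0) ∧ (0 ≤ w 0 ∧ w 0 ≤ 1)}

noncomputable section
namespace Duffy

open Set

/-- The Duffy transformation. -/
def T : (Fin 4 → ℝ) → (Fin 4 → ℝ) := fun v => ![v 0, v 0 * v 1, v 0 * v 1 * v 2, v 0 * v 3]

/-- Jacobian matrix of the Duffy transformation. -/
def A (v : Fin 4 → ℝ) : Matrix (Fin 4) (Fin 4) ℝ :=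
  ![![1, 0, 0, 0], ![v 1, v 0, 0, 0], ![v 1 * v 2, v 0 * v 2, v 0 * v 1, 0], ![v 3, 0, 0, v 0]]

/-- Jacobian of the Duffy transformation as a continuous linear map. -/
def L (v : Fin 4 → ℝ) : (Fin 4 → ℝ) →L[ℝ] (Fin 4 → ℝ) :=
  (Matrix.toLin' (A v)).toContinuousLinearMap

lemma det_L (v : Fin 4 → ℝ) : (L v).det = v 0 ^ 3 * v 1 := by
  rw [ContinuousLinearMap.det, L]
  simp only [LinearMap.coe_toContinuousLinearMap, LinearMap.det_toLin']
  simp only [Matrix.det_succ_row_zero, Fin.sum_univ_succ, Matrix.submatrix_apply, Matrix.det_fin_zero, Fin.sum_univ_zero]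
  simp [A, Fin.succAbove]
  ring

lemma hasFDerivAt_T (v : Fin 4 → ℝ) : HasFDerivAt T (L v) v := by
  rw [hasFDerivAt_pi']
  intro i
  fin_cases i
  · refine (hasFDerivAt_apply (𝕜 := ℝ) (0 : Fin 4) v).congr_fderiv ?_
    ext x
    simp only [L, ContinuousLinearMap.comp_apply, LinearMap.coe_toContinuousLinearMap']
    erw [Matrix.toLin'_apply]
    simp [A, Matrix.mulVec, dotProduct, Fin.sum_univ_four]
  · refine ((hasFDerivAt_apply (𝕜 := ℝ) (0 : Fin 4) v).mul
      (hasFDerivAt_apply (𝕜 := ℝ) 1 v)).congr_fderiv ?_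
    ext x
    simp only [L, ContinuousLinearMap.comp_apply, LinearMap.coe_toContinuousLinearMap']
    erw [Matrix.toLin'_apply]
    simp [A, Matrix.mulVec, dotProduct, Fin.sum_univ_four]
    ring
  · refine (((hasFDerivAt_apply (𝕜 := ℝ) (0 : Fin 4) v).mul
      (hasFDerivAt_apply (𝕜 := ℝ) 1 v)).mul (hasFDerivAt_apply (𝕜 := ℝ) 2 v)).congr_fderiv ?_
    ext x
    simp only [L, ContinuousLinearMap.comp_apply, LinearMap.coe_toContinuousLinearMap']
    erw [Matrix.toLin'_apply]
    simp [A, Matrix.mulVec, dotProduct, Fin.sum_univ_four]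
    ring
  · refine ((hasFDerivAt_apply (𝕜 := ℝ) (0 : Fin 4) v).mul
      (hasFDerivAt_apply (𝕜 := ℝ) 3 v)).congr_fderiv ?_
    ext x
    simp only [L, ContinuousLinearMap.comp_apply, LinearMap.coe_toContinuousLinearMap']
    erw [Matrix.toLin'_apply]
    simp [A, Matrix.mulVec, dotProduct, Fin.sum_univ_four]
    ring

/-- The open unit box. -/
def box : Set (Fin 4 → ℝ) :=
  {v | v 0 ∈ Ioo (0:ℝ) 1 ∧ v 1 ∈ Ioo (0:ℝ) 1 ∧ v 2 ∈ Ioo (0:ℝ) 1 ∧ v 3 ∈ Ioo (0:ℝ) 1}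

lemma measurableSet_box : MeasurableSet box := by
  apply MeasurableSet.inter
  · exact (measurable_pi_apply 0) measurableSet_Ioo
  apply MeasurableSet.inter
  · exact (measurable_pi_apply 1) measurableSet_Ioo
  exact ((measurable_pi_apply 2) measurableSet_Ioo).inter
    ((measurable_pi_apply 3) measurableSet_Ioo)

/-- The open version of the Duffy region. -/
def sOpen : Set (Fin 4 → ℝ) :=
  {w | (0 < w 0 ∧ w 0 < 1) ∧ (0 < w 1 ∧ w 1 < w 0) ∧ (0 < w 2 ∧ w 2 < w 1) ∧
    (0 < w 3 ∧ w 3 < w 0)}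

lemma injOn_T : InjOn T box := by
  rintro v ⟨⟨h00, _⟩, ⟨h10, _⟩, _, _⟩ u ⟨⟨g00, _⟩, ⟨g10, _⟩, _, _⟩ h
  have e0 : v 0 = u 0 := by simpa [T] using congrFun h 0
  have e1 : v 0 * v 1 = u 0 * u 1 := by simpa [T] using congrFun h 1
  have e2 : v 0 * v 1 * v 2 = u 0 * u 1 * u 2 := by simpa [T] using congrFun h 2
  have e3 : v 0 * v 3 = u 0 * u 3 := by simpa [T] using congrFun h 3
  have h1 : v 1 = u 1 := by
    rw [← e0] at e1; exact mul_left_cancel₀ (ne_of_gt h00) e1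
  funext i
  fin_cases i
  · exact e0
  · exact h1
  · rw [← e0, ← h1] at e2
    exact mul_left_cancel₀ (by positivity) e2
  · rw [← e0] at e3
    exact mul_left_cancel₀ (ne_of_gt h00) e3

lemma image_T : T '' box = sOpen := by
  ext w
  constructor
  · rintro ⟨v, ⟨⟨h00, h01⟩, ⟨h10, h11⟩, ⟨h20, h21⟩, ⟨h30, h31⟩⟩, rfl⟩
    refine ⟨⟨?_, ?_⟩, ⟨?_, ?_⟩, ⟨?_, ?_⟩, ⟨?_, ?_⟩⟩ <;> simp [T]
    · exact h00
    · exact h01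
    · positivity
    · exact mul_lt_of_lt_one_right h00 h11
    · positivity
    · exact mul_lt_of_lt_one_right (by positivity) h21
    · positivity
    · exact mul_lt_of_lt_one_right h00 h31
  · rintro ⟨⟨h00, h01⟩, ⟨h10, h11⟩, ⟨h20, h21⟩, ⟨h30, h31⟩⟩
    refine ⟨![w 0, w 1 / w 0, w 2 / w 1, w 3 / w 0],
      ⟨⟨h00, h01⟩, ⟨?_, ?_⟩, ⟨?_, ?_⟩, ⟨?_, ?_⟩⟩, ?_⟩ <;> try
      simp only [Matrix.cons_val_zero, Matrix.cons_val_one, Matrix.head_cons,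
        Matrix.cons_val_two, Matrix.tail_cons, Matrix.cons_val_three]
    · positivity
    · rw [div_lt_one h00]; exact h11
    · positivity
    · rw [div_lt_one h10]; exact h21
    · positivity
    · rw [div_lt_one h00]; exact h31
    · funext i
      fin_cases i <;> simp [T] <;> field_simp

lemma sOpen_subset : sOpen ⊆ duffyRegionP := by
  rintro w ⟨⟨h00, h01⟩, ⟨h10, h11⟩, ⟨h20, h21⟩, ⟨h30, h31⟩⟩
  exact ⟨⟨h30.le, h31.le⟩, ⟨h20.le, h21.le⟩, ⟨h10.le, h11.le⟩, ⟨h00.le, h01.le⟩⟩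

lemma coord_null (i : Fin 4) (c : ℝ) : volume {w : Fin 4 → ℝ | w i = c} = 0 := by
  rw [volume_pi]
  haveI : NullSingletonClass ((fun _ : Fin 4 => (volume : Measure ℝ)) i) :=
    by show NullSingletonClass (volume : Measure ℝ); infer_instance
  exact Measure.pi_hyperplane (α := fun _ : Fin 4 => ℝ) (μ := fun _ => volume) i c

lemma diag_null (i j : Fin 4) (hij : i ≠ j) : volume {w : Fin 4 → ℝ | w i = w j} = 0 := by
  have hset : {w : Fin 4 → ℝ | w i = w j} =
      ↑(LinearMap.ker ((LinearMap.proj i : ((Fin 4 → ℝ) →ₗ[ℝ] ℝ)) - LinearMap.proj j)) := by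
    ext w
    simp [LinearMap.mem_ker, sub_eq_zero]
  rw [hset]
  apply Measure.addHaar_submodule
  intro h
  have := (Submodule.eq_top_iff'.1 h) (Pi.single i 1)
  simp [LinearMap.mem_ker, Pi.single_eq_same, Pi.single_eq_of_ne hij.symm] at this

lemma null_diff : volume (duffyRegionP \ sOpen) = 0 := by
  have hsub : duffyRegionP \ sOpen ⊆
      {w : Fin 4 → ℝ | w 0 = 0} ∪ {w | w 0 = 1} ∪ {w | w 1 = 0} ∪ {w | w 1 = w 0} ∪
      {w | w 2 = 0} ∪ {w | w 2 = w 1} ∪ {w | w 3 = 0} ∪ {w | w 3 = w 0} := by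
    rintro w ⟨⟨⟨h3a, h3b⟩, ⟨h2a, h2b⟩, ⟨h1a, h1b⟩, ⟨h0a, h0b⟩⟩, hno⟩
    simp only [mem_union, mem_setOf_eq]
    by_contra hc
    push_neg at hc
    obtain ⟨⟨⟨⟨⟨⟨⟨c1, c2⟩, c3⟩, c4⟩, c5⟩, c6⟩, c7⟩, c8⟩ := hc
    exact hno ⟨⟨h0a.lt_of_ne (Ne.symm c1), h0b.lt_of_ne c2⟩,
      ⟨h1a.lt_of_ne (Ne.symm c3), h1b.lt_of_ne c4⟩,
      ⟨h2a.lt_of_ne (Ne.symm c5), h2b.lt_of_ne c6⟩,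
      ⟨h3a.lt_of_ne (Ne.symm c7), h3b.lt_of_ne c8⟩⟩
  refine measure_mono_null hsub ?_
  repeat' apply measure_union_null
  all_goals first
    | exact coord_null _ _
    | exact diag_null _ _ (by decide)

lemma p_ae_eq : duffyRegionP =ᵐ[volume] sOpen :=
  ae_eq_set.2 ⟨null_diff, by rw [diff_eq_empty.2 sOpen_subset]; exact measure_empty⟩

/-- Identification of `Fin 4 → ℝ` with `ℝ × ℝ × ℝ × ℝ`. -/
def Eq4 : (Fin 4 → ℝ) ≃ᵐ ℝ × ℝ × ℝ × ℝ :=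
  (MeasurableEquiv.piFinSuccAbove (fun _ : Fin 4 => ℝ) 0).trans <|
    (MeasurableEquiv.refl ℝ).prodCongr <|
      (MeasurableEquiv.piFinSuccAbove (fun _ : Fin 3 => ℝ) 0).trans <|
        (MeasurableEquiv.refl ℝ).prodCongr MeasurableEquiv.finTwoArrow

lemma Eq4_apply (w : Fin 4 → ℝ) : Eq4 w = (w 0, w 1, w 2, w 3) := by
  simp [Eq4, MeasurableEquiv.piFinSuccAbove_apply, MeasurableEquiv.finTwoArrow_apply,
    MeasurableEquiv.prodCongr, Fin.tail, show (Fin.succ 2 : Fin 4) = 3 from rfl]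

lemma measurePreserving_Eq4 : MeasurePreserving Eq4 volume volume := by
  have h1 := volume_preserving_piFinSuccAbove (fun _ : Fin 4 => ℝ) 0
  have h2 := volume_preserving_piFinSuccAbove (fun _ : Fin 3 => ℝ) 0
  have h3 := volume_preserving_finTwoArrow ℝ
  exact (((MeasurePreserving.id volume).prod
    (((MeasurePreserving.id volume).prod h3).comp h2)).comp h1)

/-- The transformed integrand. -/
def g : ℝ × ℝ × ℝ × ℝ → ℝ :=
  fun x => x.1 * (x.2.1 / (1 + x.2.1 ^ 2 + (x.2.1 * x.2.2.1) ^ 2 + x.2.2.2 ^ 2))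

lemma continuous_g : Continuous g := by
  apply continuous_fst.mul
  apply Continuous.div (by fun_prop) (by fun_prop)
  intro x
  positivity

/-- The open unit box in `ℝ × ℝ × ℝ × ℝ`. -/
def B4 : Set (ℝ × ℝ × ℝ × ℝ) := Ioo 0 1 ×ˢ Ioo 0 1 ×ˢ Ioo 0 1 ×ˢ Ioo 0 1

lemma integrableOn_g : IntegrableOn g B4 := by
  apply (continuous_g.locallyIntegrable.integrableOn_isCompact
    (isCompact_Icc.prod (isCompact_Icc.prod (isCompact_Icc.prod
      (isCompact_Icc (a := (0:ℝ)) (b := 1)))))).mono_set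
  exact prod_mono Ioo_subset_Icc_self (prod_mono Ioo_subset_Icc_self
    (prod_mono Ioo_subset_Icc_self Ioo_subset_Icc_self))

lemma key (f : ℝ → ℝ) : ∫ x in Ioo (0:ℝ) 1, f x = ∫ x in (0:ℝ)..1, f x := by
  rw [intervalIntegral.integral_of_le zero_le_one, integral_Ioc_eq_integral_Ioo]

lemma prod_integral :
    ∫ y in B4, g y =
      (1/2) * ∫ η₁ in (0:ℝ)..1, ∫ η₂ in (0:ℝ)..1, ∫ η₃ in (0:ℝ)..1,
        η₁ / (1 + η₁ ^ 2 + (η₁ * η₂) ^ 2 + η₃ ^ 2) := by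
  have hB3 : ∀ a : ℝ, IntegrableOn (fun y : ℝ × ℝ × ℝ => g (a, y))
      (Ioo 0 1 ×ˢ Ioo 0 1 ×ˢ Ioo 0 1) := by
    intro a
    apply ((continuous_g.comp
      (continuous_const.prodMk continuous_id)).locallyIntegrable.integrableOn_isCompact
      (isCompact_Icc.prod (isCompact_Icc.prod (isCompact_Icc (a := (0:ℝ)) (b := 1))))).mono_set
    exact prod_mono Ioo_subset_Icc_self (prod_mono Ioo_subset_Icc_self Ioo_subset_Icc_self)
  have hB2 : ∀ a b : ℝ, IntegrableOn (fun z : ℝ × ℝ => g (a, b, z)) (Ioo 0 1 ×ˢ Ioo 0 1) := by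
    intro a b
    apply ((continuous_g.comp (continuous_const.prodMk (continuous_const.prodMk
      continuous_id))).locallyIntegrable.integrableOn_isCompact
      (isCompact_Icc.prod (isCompact_Icc (a := (0:ℝ)) (b := 1)))).mono_set
    exact prod_mono Ioo_subset_Icc_self Ioo_subset_Icc_self
  rw [B4, Measure.volume_eq_prod, setIntegral_prod _ integrableOn_g]
  have step1 : ∀ a : ℝ, ∫ y in Ioo (0:ℝ) 1 ×ˢ Ioo (0:ℝ) 1 ×ˢ Ioo (0:ℝ) 1, g (a, y) =
      ∫ b in Ioo (0:ℝ) 1, ∫ z in Ioo (0:ℝ) 1 ×ˢ Ioo (0:ℝ) 1, g (a, b, z) := by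
    intro a
    rw [Measure.volume_eq_prod, setIntegral_prod _ (hB3 a)]
  have step2 : ∀ a b : ℝ, ∫ z in Ioo (0:ℝ) 1 ×ˢ Ioo (0:ℝ) 1, g (a, b, z) =
      ∫ c in Ioo (0:ℝ) 1, ∫ d in Ioo (0:ℝ) 1, g (a, b, c, d) := by
    intro a b
    rw [Measure.volume_eq_prod, setIntegral_prod _ (hB2 a b)]
  simp only [step1]
  simp only [step2]
  simp only [key]
  simp only [g]
  simp only [intervalIntegral.integral_const_mul, intervalIntegral.integral_mul_const]
  rw [integral_id]
  norm_num

lemma box_eq_preimage : box = Eq4 ⁻¹' B4 := by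
  ext v
  simp [box, B4, Eq4_apply]

end Duffy
end

open Duffy Set

/-- The singular integral of `f(w) = 1/(w₁²+w₂²+w₃²+w₄²)` over `p` is finite and equals
`(1/2)·∫₀¹∫₀¹∫₀¹ η₁/(1+η₁²+(η₁η₂)²+η₃²) dη₃ dη₂ dη₁`. -/
theorem integral_duffyRegionP :
    IntegrableOn (fun w : Fin 4 → ℝ => (w 0 ^ 2 + w 1 ^ 2 + w 2 ^ 2 + w 3 ^ 2)⁻¹)
      duffyRegionP volume ∧
    ∫ w in duffyRegionP, (w 0 ^ 2 + w 1 ^ 2 + w 2 ^ 2 + w 3 ^ 2)⁻¹ =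
      (1/2) * ∫ η₁ in (0:ℝ)..1, ∫ η₂ in (0:ℝ)..1, ∫ η₃ in (0:ℝ)..1,
        η₁ / (1 + η₁ ^ 2 + (η₁ * η₂) ^ 2 + η₃ ^ 2) := by
  set f : (Fin 4 → ℝ) → ℝ := fun w => (w 0 ^ 2 + w 1 ^ 2 + w 2 ^ 2 + w 3 ^ 2)⁻¹ with hf
  have hT : ∀ v ∈ box, HasFDerivWithinAt T (L v) box v :=
    fun v _ => (hasFDerivAt_T v).hasFDerivWithinAt
  have hptwise : ∀ v ∈ box, |(L v).det| • f (T v) = g (Eq4 v) := by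
    rintro v ⟨⟨h00, h01⟩, ⟨h10, h11⟩, _, _⟩
    rw [det_L, Eq4_apply]
    have habs : |v 0 ^ 3 * v 1| = v 0 ^ 3 * v 1 := abs_of_pos (by positivity)
    simp only [hf, T, g, smul_eq_mul, habs, Matrix.cons_val_zero, Matrix.cons_val_one,
      Matrix.head_cons, Matrix.cons_val_two, Matrix.tail_cons, Matrix.cons_val_three]
    have e1 : (0:ℝ) < 1 + v 1 ^ 2 + (v 1 * v 2) ^ 2 + v 3 ^ 2 := by positivity
    have e2 : (0:ℝ) < v 0 ^ 2 + (v 0 * v 1) ^ 2 + (v 0 * v 1 * v 2) ^ 2 + (v 0 * v 3) ^ 2 := by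
      positivity
    field_simp
  have hcomp : IntegrableOn (g ∘ Eq4) box volume := by
    rw [box_eq_preimage]
    exact (measurePreserving_Eq4.integrableOn_comp_preimage
      Eq4.measurableEmbedding).2 integrableOn_g
  have hIbox : IntegrableOn (fun v => |(L v).det| • f (T v)) box volume :=
    hcomp.congr_fun (fun v hv => (hptwise v hv).symm) measurableSet_box
  have hrestrict : volume.restrict duffyRegionP = volume.restrict sOpen :=
    Measure.restrict_congr_set p_ae_eq
  constructor
  · rw [IntegrableOn, hrestrict, ← image_T]
    exact (integrableOn_image_iff_integrableOn_abs_det_fderiv_smul volume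
      measurableSet_box hT injOn_T f).2 hIbox
  · calc ∫ w in duffyRegionP, f w = ∫ w in sOpen, f w := by rw [hrestrict]
      _ = ∫ w in T '' box, f w := by rw [image_T]
      _ = ∫ v in box, |(L v).det| • f (T v) :=
          integral_image_eq_integral_abs_det_fderiv_smul volume measurableSet_box hT injOn_T f
      _ = ∫ v in box, g (Eq4 v) := setIntegral_congr_fun measurableSet_box hptwise
      _ = ∫ y in B4, g y := by
          rw [box_eq_preimage]
          exact measurePreserving_Eq4.setIntegral_preimage_emb Eq4.measurableEmbedding g B4
      _ = (1/2) * ∫ η₁ in (0:ℝ)..1, ∫ η₂ in (0:ℝ)..1, ∫ η₃ in (0:ℝ)..1,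
            η₁ / (1 + η₁ ^ 2 + (η₁ * η₂) ^ 2 + η₃ ^ 2) := prod_integral
end

section
/- If f : [0,1] → ℂ extends analytically to the closed ellipse E_ρ with focal points 0 and 1 and sum of half-axes ρ > 1/2, and satisfies |f| ≤ M on E_ρ, then the error of the n-point Gauss–Legendre quadrature on [0,1] satisfies E^n[f] ≤ c·(2ρ)^{−2n}·M for a constant c independent of f and n. -/
open MeasureTheory

/-- A Gauss(-Legendre) quadrature rule with `n` points on `[0,1]`: nodes in `[0,1]`,
positive weights, exact for all polynomials of degree at most `2n−1`.  These
properties characterize the Gauss–Legendre rule. -/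
structure GaussRule (n : ℕ) where
  node : Fin n → ℝ
  weight : Fin n → ℝ
  node_mem : ∀ i, node i ∈ Set.Icc (0:ℝ) 1
  weight_pos : ∀ i, 0 < weight i
  exact : ∀ p : Polynomial ℝ, p.natDegree ≤ 2 * n - 1 →
    ∑ i, weight i * p.eval (node i) = ∫ x in (0:ℝ)..1, p.eval x

/-- The closed ellipse with foci `0` and `1` whose semimajor and semiminor axes sum
to `ρ` (so that the sum of the distances to the foci is at most `ρ + 1/(4ρ)`). -/
def fociEllipse (ρ : ℝ) : Set ℂ :=
  {z | ‖z‖ + ‖z - 1‖ ≤ ρ + 1 / (4 * ρ)}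

lemma cheb_deg : ∀ k : ℕ, (Polynomial.Chebyshev.T ℝ (k:ℤ)).natDegree ≤ k
  | 0 => by simp [Polynomial.Chebyshev.T_zero]
  | 1 => by simp [Polynomial.Chebyshev.T_one]
  | (k+2) => by
    have h1 := cheb_deg (k+1)
    have h0 := cheb_deg k
    rw [show ((k+2 : ℕ) : ℤ) = (k:ℤ) + 2 by push_cast; ring, Polynomial.Chebyshev.T_add_two]
    refine le_trans (Polynomial.natDegree_sub_le _ _) ?_
    rw [max_le_iff]
    constructor
    · refine le_trans Polynomial.natDegree_mul_le ?_
      have h2 : (2*Polynomial.X : Polynomial ℝ).natDegree ≤ 1 := by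
        refine le_trans Polynomial.natDegree_mul_le ?_
        simp
      have h3 : (Polynomial.Chebyshev.T ℝ ((k:ℤ)+1)).natDegree ≤ k + 1 := by
        rw [show ((k:ℤ)+1) = ((k+1:ℕ):ℤ) by push_cast; ring]
        exact h1
      omega
    · omega

lemma ellipse_map {ρ : ℝ} (hρ : 1/2 < ρ) {ζ : ℂ} (h : |ζ.im| ≤ Real.log (2*ρ)) :
    (Complex.cos ζ + 1)/2 ∈ fociEllipse ρ := by
  have hρ0 : (0:ℝ) < ρ := by linarith
  set r := 2*ρ with hrdef
  have hr1 : (1:ℝ) < r := by rw [hrdef]; linarith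
  have hr0 : (0:ℝ) < r := by linarith
  set u := Complex.exp (ζ * Complex.I) with hu
  have hu0 : u ≠ 0 := Complex.exp_ne_zero _
  have habs : ‖u‖ = Real.exp (-ζ.im) := by
    rw [hu, Complex.norm_exp]
    congr 1
    simp [Complex.mul_re]
  set s := ‖u‖ with hs
  have hs0 : 0 < s := by rw [habs]; exact Real.exp_pos _
  have hsu : s ≤ r := by
    rw [habs, ← Real.exp_log hr0]
    exact Real.exp_le_exp.mpr (by have := abs_le.mp h; linarith [this.1])
  have hsl : 1/r ≤ s := by
    rw [habs]
    rw [show (1/r : ℝ) = Real.exp (-(Real.log r)) by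
      rw [Real.exp_neg, Real.exp_log hr0]; ring]
    exact Real.exp_le_exp.mpr (by have := abs_le.mp h; linarith [this.2])
  have hcos : Complex.cos ζ = (u + u⁻¹)/2 := by
    have := Complex.two_cos ζ
    rw [hu, ← Complex.exp_neg]
    rw [show -(ζ * Complex.I) = -ζ * Complex.I by ring] at *
    linear_combination this / 2
  have h1 : (Complex.cos ζ + 1)/2 = (u+1)^2/(4*u) := by rw [hcos]; field_simp; ring
  have h2 : (Complex.cos ζ + 1)/2 - 1 = (u-1)^2/(4*u) := by rw [hcos]; field_simp; ring
  have e1 : (‖u+1‖)^2 = s^2 + 1 + 2*u.re := by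
    rw [Complex.sq_norm, Complex.normSq_add, ← Complex.sq_norm u]
    simp [hs]
  have e2 : (‖u-1‖)^2 = s^2 + 1 - 2*u.re := by
    rw [Complex.sq_norm, sub_eq_add_neg, Complex.normSq_add, ← Complex.sq_norm u]
    simp [hs]
    ring
  have key : ‖(Complex.cos ζ + 1)/2‖ + ‖(Complex.cos ζ + 1)/2 - 1‖
      = (s^2+1)/(2*s) := by
    rw [h2, h1, norm_div, norm_div, norm_pow, norm_pow, norm_mul]
    rw [e1, e2]
    have : ‖(4:ℂ)‖ = 4 := by norm_num
    rw [this, ← hs]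
    field_simp
    ring
  show ‖(Complex.cos ζ + 1)/2‖ + ‖(Complex.cos ζ + 1)/2 - 1‖ ≤ ρ + 1/(4*ρ)
  rw [key]
  have hrs : 0 ≤ r*s - 1 := by
    have h4 : r*(1/r) ≤ r*s := mul_le_mul_of_nonneg_left hsl hr0.le
    rw [mul_one_div, div_self hr0.ne'] at h4
    linarith
  have step : (s^2+1)/(2*s) ≤ (r^2+1)/(2*r) := by
    rw [div_le_div_iff₀ (by linarith) (by linarith)]
    nlinarith [mul_nonneg (by linarith : (0:ℝ) ≤ r - s) hrs]
  refine le_trans step (le_of_eq ?_)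
  rw [hrdef]
  field_simp
  ring

lemma fourier_eq [Fact (0 < 2*Real.pi)] (k : ℤ) (θ : ℝ) :
    fourier (T := 2*Real.pi) k (θ : AddCircle (2*Real.pi))
      = Complex.exp ((k:ℂ) * (θ:ℂ) * Complex.I) := by
  rw [fourier_coe_apply]
  congr 1
  have hπ : (Real.pi : ℂ) ≠ 0 := by
    simpa using Real.pi_ne_zero
  field_simp
  push_cast
  ring

lemma coeff_bound {ρ : ℝ} (hρ : 1/2 < ρ) (fstar : ℂ → ℂ) (M : ℝ)
    (hd : DifferentiableOn ℂ fstar (fociEllipse ρ))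
    (hb : ∀ z ∈ fociEllipse ρ, ‖fstar z‖ ≤ M)
    [Fact (0 < 2*Real.pi)]
    (G : C(AddCircle (2*Real.pi), ℂ))
    (hG : ∀ θ : ℝ, G (θ : AddCircle (2*Real.pi)) = fstar ((Complex.cos θ + 1)/2)) :
    ∀ k : ℤ, ‖fourierCoeff (⇑G) k‖ ≤ M * (1/(2*ρ))^(k.natAbs) := by
  have hρ0 : (0:ℝ) < ρ := by linarith
  set r := 2*ρ with hrdef
  have hr1 : (1:ℝ) < r := by rw [hrdef]; linarith
  have hr0 : (0:ℝ) < r := by linarith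
  set L := Real.log r with hLdef
  have hL0 : 0 < L := Real.log_pos hr1
  have hrexp : Real.exp L = r := Real.exp_log hr0
  set gper : ℝ → ℂ := fun θ => fstar ((Complex.cos θ + 1)/2) with hgper
  -- coefficient formula
  have hcoef : ∀ k : ℤ, fourierCoeff (⇑G) k
      = (1/(2*Real.pi)) • ∫ θ in (0:ℝ)..(2*Real.pi),
          (fourier (T := 2*Real.pi) (-k) (θ : AddCircle (2*Real.pi))) • gper θ := by
    intro k
    have h := fourierCoeff_eq_intervalIntegral (⇑G) k 0
    rw [zero_add] at h
    rw [h]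
    congr 1
    refine intervalIntegral.integral_congr ?_
    intro θ _
    simp only [hG θ, hgper]
  -- evenness of gper
  have hgev : ∀ θ : ℝ, gper (2*Real.pi - θ) = gper θ := by
    intro θ
    simp only [hgper]
    congr 2
    push_cast
    rw [show 2*(Real.pi:ℂ) - (θ:ℂ) = -θ + 2*Real.pi by ring, Complex.cos_add_two_pi,
      Complex.cos_neg]
  have heven : ∀ k : ℤ, fourierCoeff (⇑G) (-k) = fourierCoeff (⇑G) k := by
    intro k
    rw [hcoef, hcoef]
    congr 1
    have hsub := intervalIntegral.integral_comp_sub_left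
      (fun θ : ℝ => (fourier (T := 2*Real.pi) (-k) ((θ:ℝ) : AddCircle (2*Real.pi))) • gper θ)
      (2*Real.pi) (a := 0) (b := 2*Real.pi)
    rw [sub_self, sub_zero] at hsub
    rw [← hsub]
    refine intervalIntegral.integral_congr ?_
    intro θ _
    simp only
    rw [hgev]
    congr 1
    rw [neg_neg, fourier_eq, fourier_eq]
    rw [show ((-k:ℤ):ℂ) * ((2*Real.pi - θ : ℝ):ℂ) * Complex.I
        = (k:ℂ) * (θ:ℂ) * Complex.I + (-k:ℤ) * (2*Real.pi*Complex.I) by push_cast; ring]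
    rw [Complex.exp_add, Complex.exp_int_mul_two_pi_mul_I, mul_one]
  -- bound for natural k
  have hnat : ∀ k : ℕ, ‖fourierCoeff (⇑G) (k:ℤ)‖ ≤ M * (1/r)^k := by
    intro k
    set H : ℂ → ℂ :=
      fun ζ => Complex.exp (-(k:ℂ) * ζ * Complex.I) * fstar ((Complex.cos ζ + 1)/2) with hH
    have hmaps : Set.MapsTo (fun ζ : ℂ => (Complex.cos ζ + 1)/2)
        (Set.uIcc (0:ℝ) (2*Real.pi) ×ℂ Set.uIcc (-L) 0) (fociEllipse ρ) := by
      intro ζ hζ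
      refine ellipse_map hρ ?_
      have h2 := (Complex.mem_reProdIm.mp hζ).2
      rw [Set.uIcc_of_le (by linarith : -L ≤ 0)] at h2
      rw [abs_le]
      exact ⟨h2.1, le_trans h2.2 hL0.le⟩
    have hHd : DifferentiableOn ℂ H (Set.uIcc (0:ℝ) (2*Real.pi) ×ℂ Set.uIcc (-L) 0) := by
      apply DifferentiableOn.mul
      · apply Differentiable.differentiableOn
        apply Differentiable.cexp
        exact (differentiable_id.const_mul _).mul_const _
      · exact hd.comp (((Complex.differentiable_cos.add_const 1).div_const 2).differentiableOn)
          hmaps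
    have hrect := Complex.integral_boundary_rect_eq_zero_of_differentiableOn H
      (⟨0, -L⟩ : ℂ) (⟨2*Real.pi, 0⟩ : ℂ) hHd
    simp only [smul_eq_mul] at hrect
    have hside : (∫ (y : ℝ) in (-L)..0, H (↑(2 * Real.pi) + ↑y * Complex.I))
        = ∫ (y : ℝ) in (-L)..0, H (↑(0:ℝ) + ↑y * Complex.I) := by
      refine intervalIntegral.integral_congr ?_
      intro y _
      simp only [hH]
      have hc : Complex.cos (((2*Real.pi : ℝ):ℂ) + ↑y * Complex.I)
          = Complex.cos (((0:ℝ):ℂ) + ↑y * Complex.I) := by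
        rw [show ((2*Real.pi:ℝ):ℂ) + ↑y*Complex.I
            = (((0:ℝ):ℂ) + ↑y*Complex.I) + 2*Real.pi by push_cast; ring]
        exact Complex.cos_add_two_pi _
      rw [hc]
      congr 1
      rw [show -(k:ℂ) * (((2*Real.pi:ℝ):ℂ) + ↑y*Complex.I) * Complex.I
          = -(k:ℂ) * (((0:ℝ):ℂ) + ↑y*Complex.I) * Complex.I
            + ((-(k:ℤ)) : ℤ) * (2*Real.pi*Complex.I) by push_cast; ring]
      rw [Complex.exp_add, Complex.exp_int_mul_two_pi_mul_I, mul_one]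
    have htb : (∫ (x : ℝ) in (0:ℝ)..(2*Real.pi), H (↑x + ↑(-L) * Complex.I))
        = ∫ (x : ℝ) in (0:ℝ)..(2*Real.pi), H (↑x + ↑(0:ℝ) * Complex.I) := by
      linear_combination hrect - Complex.I * hside
    have hformula : fourierCoeff (⇑G) (k:ℤ)
        = (1/(2*Real.pi)) • ∫ x in (0:ℝ)..(2*Real.pi), H (↑x + ↑(-L) * Complex.I) := by
      rw [hcoef, htb]
      congr 1
      refine intervalIntegral.integral_congr ?_
      intro θ _
      simp only [hH, hgper, smul_eq_mul]
      rw [show ((θ:ℝ):ℂ) + ((0:ℝ):ℂ)*Complex.I = (θ:ℂ) by push_cast; ring]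
      rw [fourier_eq]
      congr 2
      push_cast
      ring
    have hnormH : ∀ x ∈ Set.uIoc (0:ℝ) (2*Real.pi),
        ‖H (↑x + ↑(-L) * Complex.I)‖ ≤ (1/r)^k * M := by
      intro x _
      rw [hH]
      simp only [norm_mul]
      have h1 : ‖Complex.exp (-(k:ℂ) * (↑x + ↑(-L) * Complex.I) * Complex.I)‖ = (1/r)^k := by
        rw [Complex.norm_exp]
        have hre : (-(k:ℂ) * ((x:ℂ) + ((-L:ℝ):ℂ) * Complex.I) * Complex.I).re
            = (k:ℝ) * (-L) := by
          simp [Complex.mul_re, Complex.mul_im]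
        rw [hre, Real.exp_nat_mul, Real.exp_neg, hrexp, ← one_div]
      have h2 : ‖fstar ((Complex.cos ((x:ℂ) + ((-L:ℝ):ℂ) * Complex.I) + 1)/2)‖ ≤ M := by
        apply hb
        apply ellipse_map hρ
        have him : (((x:ℝ):ℂ) + ((-L:ℝ):ℂ) * Complex.I).im = -L := by
          simp
        rw [him, abs_neg, abs_of_pos hL0]
      rw [h1]
      exact mul_le_mul_of_nonneg_left h2 (by positivity)
    rw [hformula, norm_smul]
    have h2π : (0:ℝ) < 2*Real.pi := Real.two_pi_pos
    have hnn : ‖(1/(2*Real.pi) : ℝ)‖ = 1/(2*Real.pi) := by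
      rw [Real.norm_eq_abs, abs_of_pos (by positivity)]
    rw [hnn]
    refine le_trans (mul_le_mul_of_nonneg_left
      (intervalIntegral.norm_integral_le_of_norm_le_const hnormH) (by positivity)) ?_
    rw [sub_zero, abs_of_pos h2π]
    rw [show 1/(2*Real.pi) * ((1/r)^k * M * (2*Real.pi)) = M * (1/r)^k * (2*Real.pi/(2*Real.pi)) by
      ring]
    rw [div_self h2π.ne', mul_one]
  intro k
  have hck : fourierCoeff ⇑G k = fourierCoeff ⇑G (k.natAbs : ℤ) := by
    rcases Int.natAbs_eq k with hk | hk
    · conv_lhs => rw [hk]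
    · conv_lhs => rw [hk]
      exact heven _
  rw [hck]
  exact hnat k.natAbs

lemma coeff_even [Fact (0 < 2*Real.pi)] (fstar : ℂ → ℂ)
    (G : C(AddCircle (2*Real.pi), ℂ))
    (hG : ∀ θ : ℝ, G (θ : AddCircle (2*Real.pi)) = fstar ((Complex.cos θ + 1)/2)) (k : ℤ) :
    fourierCoeff (⇑G) (-k) = fourierCoeff (⇑G) k := by
  set gper : ℝ → ℂ := fun θ => fstar ((Complex.cos θ + 1)/2) with hgper
  have hcoef : ∀ k : ℤ, fourierCoeff (⇑G) k
      = (1/(2*Real.pi)) • ∫ θ in (0:ℝ)..(2*Real.pi),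
          (fourier (T := 2*Real.pi) (-k) (θ : AddCircle (2*Real.pi))) • gper θ := by
    intro k
    have h := fourierCoeff_eq_intervalIntegral (⇑G) k 0
    rw [zero_add] at h
    rw [h]
    congr 1
    refine intervalIntegral.integral_congr ?_
    intro θ _
    simp only [hG θ, hgper]
  have hgev : ∀ θ : ℝ, gper (2*Real.pi - θ) = gper θ := by
    intro θ
    simp only [hgper]
    congr 2
    push_cast
    rw [show 2*(Real.pi:ℂ) - (θ:ℂ) = -θ + 2*Real.pi by ring, Complex.cos_add_two_pi,
      Complex.cos_neg]
  rw [hcoef, hcoef]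
  congr 1
  have hsub := intervalIntegral.integral_comp_sub_left
    (fun θ : ℝ => (fourier (T := 2*Real.pi) (-k) ((θ:ℝ) : AddCircle (2*Real.pi))) • gper θ)
    (2*Real.pi) (a := 0) (b := 2*Real.pi)
  rw [sub_self, sub_zero] at hsub
  rw [← hsub]
  refine intervalIntegral.integral_congr ?_
  intro θ _
  simp only
  rw [hgev]
  congr 1
  rw [neg_neg, fourier_eq, fourier_eq]
  rw [show ((-k:ℤ):ℂ) * ((2*Real.pi - θ : ℝ):ℂ) * Complex.I
      = (k:ℂ) * (θ:ℂ) * Complex.I + (-k:ℤ) * (2*Real.pi*Complex.I) by push_cast; ring]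
  rw [Complex.exp_add, Complex.exp_int_mul_two_pi_mul_I, mul_one]

set_option maxHeartbeats 2000000 in
/-- Derivative-free Gauss quadrature error estimate (Davis): if `f : [0,1] → ℂ` has an
analytic extension `f⋆` to the ellipse `E_ρ`, `ρ > 1/2`, bounded by `M` there, then the
`n`-point Gauss rule satisfies `E^n[f] ≤ c (2ρ)^(−2n) M` with `c` independent of `f`,
`M` and `n`. -/
theorem gauss_error_one_dim (ρ : ℝ) (hρ : 1/2 < ρ) :
    ∃ c > 0, ∀ (n : ℕ) (Q : GaussRule n) (f : ℝ → ℂ) (fstar : ℂ → ℂ) (M : ℝ),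
      DifferentiableOn ℂ fstar (fociEllipse ρ) →
      (∀ x ∈ Set.Icc (0:ℝ) 1, fstar x = f x) →
      (∀ z ∈ fociEllipse ρ, ‖fstar z‖ ≤ M) →
      ‖(∫ x in (0:ℝ)..1, f x) - ∑ i, (Q.weight i : ℂ) * f (Q.node i)‖ ≤
        c * (2 * ρ) ^ (-(2 * n : ℝ)) * M := by
  have hρ0 : (0:ℝ) < ρ := by linarith
  set r := 2*ρ with hrdef
  have hr1 : (1:ℝ) < r := by rw [hrdef]; linarith
  have hr0 : (0:ℝ) < r := by linarith
  have hq : (0:ℝ) < 1 - 1/r := by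
    rw [sub_pos, div_lt_one hr0]
    exact hr1
  have h1r0 : (0:ℝ) < 1/r := by positivity
  have h1r1 : 1/r < 1 := by rw [div_lt_one hr0]; exact hr1
  refine ⟨4 * (1 - 1/r)⁻¹, mul_pos (by norm_num) (inv_pos.mpr hq), ?_⟩
  intro n Q f fstar M hd hagree hb
  -- the target bound, rewritten
  have hrpow : (2*ρ) ^ (-(2 * n : ℝ)) = (1/r)^(2*n) := by
    rw [← hrdef, show (-(2 * (n:ℝ))) = -((2*n : ℕ) : ℝ) by push_cast; ring,
      Real.rpow_neg hr0.le, Real.rpow_natCast, one_div, inv_pow]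
  rw [hrpow]
  -- degenerate case n = 0
  rcases Nat.eq_zero_or_pos n with hn0 | hn
  · exfalso
    subst hn0
    have h1 := Q.exact 1 (by simp)
    simp at h1
  -- [0,1] sits inside the ellipse
  have hIρ : ∀ x : ℝ, x ∈ Set.Icc (0:ℝ) 1 → (x:ℂ) ∈ fociEllipse ρ := by
    intro x hx
    show ‖(x:ℂ)‖ + ‖(x:ℂ) - 1‖ ≤ ρ + 1/(4*ρ)
    rw [← Complex.ofReal_one, ← Complex.ofReal_sub, Complex.norm_real, Complex.norm_real, Real.norm_eq_abs, Real.norm_eq_abs]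
    rw [abs_of_nonneg hx.1, abs_of_nonpos (by linarith [hx.2])]
    have h40 : (0:ℝ) < 4*ρ := by linarith
    rw [← sub_nonneg]
    have : ρ + 1/(4*ρ) - (x + -(x-1)) = (2*ρ-1)^2/(4*ρ) := by field_simp; ring
    rw [this]
    positivity
  have hM0 : 0 ≤ M := by
    refine le_trans (norm_nonneg _) (hb 0 ?_)
    have := hIρ 0 (by norm_num)
    simpa using this
  -- continuity of fstar ∘ map
  have hfc : ContinuousOn fstar (fociEllipse ρ) := hd.continuousOn
  have hL0 : 0 < Real.log r := Real.log_pos hr1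
  have hmapθ : ∀ θ : ℝ, ((Complex.cos θ + 1)/2) ∈ fociEllipse ρ := by
    intro θ
    refine ellipse_map hρ ?_
    rw [← hrdef]
    simp [Complex.ofReal_im]
    linarith
  set gper : ℝ → ℂ := fun θ => fstar ((Complex.cos θ + 1)/2) with hgper
  have hper : Function.Periodic gper (2*Real.pi) := by
    intro θ
    simp only [hgper]
    have hcast : ((θ + 2*Real.pi : ℝ) : ℂ) = (θ:ℂ) + 2*Real.pi := by push_cast; ring
    rw [hcast, Complex.cos_add_two_pi]
  have hgc : Continuous gper := by
    refine hfc.comp_continuous ?_ hmapθ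
    exact ((Complex.continuous_cos.comp Complex.continuous_ofReal).add
      continuous_const).div_const 2
  haveI : Fact (0 < 2*Real.pi) := ⟨Real.two_pi_pos⟩
  set G : C(AddCircle (2*Real.pi), ℂ) :=
    ⟨hper.lift, by rw [isQuotientMap_quotient_mk'.continuous_iff]; exact hgc⟩ with hG
  have hGlift : ∀ θ : ℝ, G (θ : AddCircle (2*Real.pi)) = fstar ((Complex.cos θ + 1)/2) :=
    fun θ => hper.lift_coe θ
  set c : ℤ → ℂ := fun k => fourierCoeff (⇑G) k with hc
  have hCB : ∀ k : ℤ, ‖c k‖ ≤ M * (1/r)^(k.natAbs) := by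
    intro k
    rw [hrdef]
    exact coeff_bound hρ fstar M hd hb G hGlift k
  have hsumc : Summable c := by
    apply Summable.of_norm
    refine Summable.of_nonneg_of_le (fun k => norm_nonneg _) hCB ?_
    apply Summable.of_nat_of_neg <;>
    · simp only [Int.natAbs_natCast, Int.natAbs_neg]
      exact (summable_geometric_of_lt_one h1r0.le h1r1).mul_left M
  -- the approximating "polynomial"
  set s : Finset ℤ := Finset.Ioo (-(2*(n:ℤ))) (2*(n:ℤ)) with hsdef
  set P : ℤ → Polynomial ℝ :=
    fun k => (Polynomial.Chebyshev.T ℝ k).comp (Polynomial.C 2 * Polynomial.X - 1) with hP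
  have hPeval : ∀ (k : ℤ) (x : ℝ), (P k).eval x = (Polynomial.Chebyshev.T ℝ k).eval (2*x-1) := by
    intro k x
    simp [hP, Polynomial.eval_comp]
  set SP : ℝ → ℂ := fun x => ∑ k ∈ s, c k * (((P k).eval x : ℝ) : ℂ) with hSP
  -- pointwise expansion of f on [0,1]
  have hA : (0:ℝ) ≤ M * (1/r)^(2*n) * (1-1/r)⁻¹ := by positivity
  have htail : ∀ x ∈ Set.Icc (0:ℝ) 1,
      ‖f x - SP x‖ ≤ 2*(M * (1/r)^(2*n) * (1-1/r)⁻¹) := by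
    intro x hx
    set θx := Real.arccos (2*x-1) with hθ
    have hb1 : -1 ≤ 2*x-1 := by linarith [hx.1]
    have hb2 : 2*x-1 ≤ 1 := by linarith [hx.2]
    have hcosθ : Real.cos θx = 2*x-1 := Real.cos_arccos hb1 hb2
    have hGx : G (θx : AddCircle (2*Real.pi)) = f x := by
      rw [hGlift]
      rw [show ((θx:ℝ):ℂ) = ((θx : ℝ) : ℂ) from rfl]
      rw [← Complex.ofReal_cos, hcosθ]
      rw [show ((((2*x-1 : ℝ)):ℂ) + 1)/2 = ((x:ℝ):ℂ) by push_cast; ring]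
      exact hagree x hx
    have hsx : HasSum (fun k : ℤ => c k • fourier k ((θx : ℝ) : AddCircle (2*Real.pi))) (f x) := by
      rw [← hGx]
      exact has_pointwise_sum_fourier_series_of_summable hsumc _
    have hs2 : HasSum (fun k : ℤ => c (-k) • fourier (-k) ((θx : ℝ) : AddCircle (2*Real.pi)))
        (f x) := (Equiv.neg ℤ).hasSum_iff.mpr hsx
    have hs3 : HasSum (fun k : ℤ =>
        (c k • fourier k ((θx : ℝ) : AddCircle (2*Real.pi))
          + c (-k) • fourier (-k) ((θx : ℝ) : AddCircle (2*Real.pi)))/2) (f x) := by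
      have := (hsx.add hs2).div_const 2
      simpa [add_self_div_two] using this
    have heven : ∀ k : ℤ, c (-k) = c k := by
      intro k
      exact coeff_even fstar G hGlift k
    have hterm : ∀ k : ℤ,
        (c k • fourier k ((θx : ℝ) : AddCircle (2*Real.pi))
          + c (-k) • fourier (-k) ((θx : ℝ) : AddCircle (2*Real.pi)))/2
        = c k * (((P k).eval x : ℝ) : ℂ) := by
      intro k
      rw [heven k, hPeval]
      simp only [smul_eq_mul]
      rw [fourier_eq, fourier_eq, ← mul_add]
      have e1 : Complex.exp ((k:ℂ) * (θx:ℂ) * Complex.I)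
          + Complex.exp (((-k : ℤ):ℂ) * (θx:ℂ) * Complex.I)
          = 2 * Complex.cos ((k:ℂ) * (θx:ℂ)) := by
        rw [show ((-k : ℤ):ℂ) * (θx:ℂ) * Complex.I = -((k:ℂ) * (θx:ℂ)) * Complex.I by
          push_cast; ring]
        exact (Complex.two_cos _).symm
      rw [e1]
      have e2 : Complex.cos ((k:ℂ) * (θx:ℂ))
          = (((Polynomial.Chebyshev.T ℝ k).eval (2*x-1) : ℝ) : ℂ) := by
        rw [← Polynomial.Chebyshev.T_complex_cos (θx:ℂ) k]
        rw [show Complex.cos (θx:ℂ) = ((2*x-1:ℝ):ℂ) by rw [← Complex.ofReal_cos, hcosθ]]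
        rw [← Polynomial.Chebyshev.complex_ofReal_eval_T]
      rw [e2]
      ring
    have hsum_x : HasSum (fun k : ℤ => c k * (((P k).eval x : ℝ) : ℂ)) (f x) := by
      rw [← funext hterm]
      exact hs3
    -- subtract the finite part
    have hd1 : HasSum (fun k : ℤ => if k ∈ s then c k * (((P k).eval x : ℝ) : ℂ) else 0)
        (SP x) := by
      have h := hasSum_sum_of_ne_finset_zero
        (f := fun k : ℤ => if k ∈ s then c k * (((P k).eval x : ℝ) : ℂ) else 0) (s := s)
        (L := SummationFilter.unconditional ℤ)
        (by intro b hb; simp [hb])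
      convert h using 1
      rw [hSP]
      refine Finset.sum_congr rfl ?_
      intro k hk
      simp only [if_pos hk]
    have hd2 : HasSum (fun k : ℤ => c k * (((P k).eval x : ℝ) : ℂ)
        - (if k ∈ s then c k * (((P k).eval x : ℝ) : ℂ) else 0)) (f x - SP x) :=
      hsum_x.sub hd1
    -- majorant
    set w : ℤ → ℝ := fun k => if k ∈ s then 0 else M * (1/r)^(k.natAbs) with hw
    have hTb : ∀ k : ℤ, |(Polynomial.Chebyshev.T ℝ k).eval (2*x-1)| ≤ 1 := by
      intro k
      rw [← hcosθ, Polynomial.Chebyshev.T_real_cos]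
      exact Real.abs_cos_le_one _
    have hdw : ∀ k : ℤ, ‖c k * (((P k).eval x : ℝ) : ℂ)
        - (if k ∈ s then c k * (((P k).eval x : ℝ) : ℂ) else 0)‖ ≤ w k := by
      intro k
      by_cases hk : k ∈ s
      · simp [hk, hw]
      · simp only [hw, if_neg hk, sub_zero]
        rw [norm_mul, Complex.norm_real, Real.norm_eq_abs, hPeval]
        calc ‖c k‖ * |(Polynomial.Chebyshev.T ℝ k).eval (2*x-1)|
            ≤ (M * (1/r)^(k.natAbs)) * 1 :=
              mul_le_mul (hCB k) (hTb k) (abs_nonneg _) (by positivity)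
          _ = M * (1/r)^(k.natAbs) := mul_one _
    -- the majorant sums to 2A
    have hwsum : HasSum w (2*(M * (1/r)^(2*n) * (1-1/r)⁻¹)) := by
      have geo : HasSum (fun j : ℕ => (M * (1/r)^(2*n)) * (1/r)^j)
          (M * (1/r)^(2*n) * (1-1/r)⁻¹) :=
        (hasSum_geometric_of_lt_one h1r0.le h1r1).mul_left _
      have hpos : HasSum (fun j : ℕ => w (j : ℤ)) (M * (1/r)^(2*n) * (1-1/r)⁻¹) := by
        have h1 : (fun j : ℕ => w ((j + 2*n : ℕ) : ℤ)) = fun j : ℕ => (M * (1/r)^(2*n)) * (1/r)^j := by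
          funext j
          simp only [hw]
          have : ((j + 2*n : ℕ) : ℤ) ∉ s := by
            simp only [hsdef, Finset.mem_Ioo]
            push_neg
            intro
            push_cast
            omega
          simp only [if_neg this]
          rw [show (((j + 2*n : ℕ) : ℤ)).natAbs = j + 2*n by omega]
          rw [pow_add]
          ring
        have h2 : HasSum (fun j : ℕ => w ((j + 2*n : ℕ) : ℤ)) (M * (1/r)^(2*n) * (1-1/r)⁻¹) := by
          rw [h1]; exact geo
        have h3 := (hasSum_nat_add_iff (f := fun j : ℕ => w (j : ℤ)) (2*n)).mp h2
        have h4 : ∑ i ∈ Finset.range (2*n), w (i : ℤ) = 0 := by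
          refine Finset.sum_eq_zero ?_
          intro i hi
          simp only [hw]
          rw [if_pos]
          simp only [hsdef, Finset.mem_Ioo]
          have := Finset.mem_range.mp hi
          constructor <;> omega
        rw [h4, add_zero] at h3
        exact h3
      have hneg : HasSum (fun j : ℕ => w (-(j+1) : ℤ)) (M * (1/r)^(2*n) * (1-1/r)⁻¹) := by
        have h2' : HasSum (fun j : ℕ => (fun j : ℕ => w (-(j+1) : ℤ)) (j + (2*n-1)))
            (M * (1/r)^(2*n) * (1-1/r)⁻¹) := by
          have h1 : (fun j : ℕ => (fun j : ℕ => w (-(j+1) : ℤ)) (j + (2*n-1)))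
              = fun j : ℕ => (M * (1/r)^(2*n)) * (1/r)^j := by
            funext j
            simp only [hw]
            have hns : (-(((j + (2*n-1) : ℕ) : ℤ)+1)) ∉ s := by
              simp only [hsdef, Finset.mem_Ioo]
              push_neg
              intro hcon
              exfalso
              omega
            rw [if_neg hns]
            rw [show ((-(((j + (2*n-1) : ℕ) : ℤ)+1))).natAbs = j + 2*n by omega]
            rw [pow_add]
            ring
          rw [h1]
          exact geo
        have h3 := (hasSum_nat_add_iff (f := fun j : ℕ => w (-(j+1) : ℤ)) (2*n-1)).mp h2'
        have h4 : ∑ i ∈ Finset.range (2*n-1), w (-(i+1) : ℤ) = 0 := by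
          refine Finset.sum_eq_zero ?_
          intro i hi
          simp only [hw]
          rw [if_pos]
          simp only [hsdef, Finset.mem_Ioo]
          have := Finset.mem_range.mp hi
          constructor <;> omega
        rw [h4, add_zero] at h3
        exact h3
      have := hpos.of_nat_of_neg_add_one (f := w) hneg
      convert this using 1
      ring
    -- conclude the tail bound
    rw [← hd2.tsum_eq]
    have hsd : Summable (fun k : ℤ => ‖c k * (((P k).eval x : ℝ) : ℂ)
        - (if k ∈ s then c k * (((P k).eval x : ℝ) : ℂ) else 0)‖) :=
      Summable.of_nonneg_of_le (fun k => norm_nonneg _) hdw hwsum.summable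
    refine le_trans (norm_tsum_le_tsum_norm hsd) ?_
    refine le_trans (hsd.tsum_le_tsum hdw hwsum.summable) ?_
    rw [hwsum.tsum_eq]
  -- quadrature exactness for SP
  have hPdeg : ∀ k ∈ s, (P k).natDegree ≤ 2*n - 1 := by
    intro k hk
    rw [hP]
    simp only
    refine le_trans Polynomial.natDegree_comp_le ?_
    have hd1 : (Polynomial.C (2:ℝ) * Polynomial.X - 1).natDegree ≤ 1 := by
      rw [show (Polynomial.C (2:ℝ) * Polynomial.X - 1)
          = Polynomial.C (2:ℝ) * Polynomial.X + Polynomial.C (-1) by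
        rw [Polynomial.C_neg, Polynomial.C_1]; ring]
      rw [Polynomial.natDegree_linear (by norm_num)]
    have hd2 : (Polynomial.Chebyshev.T ℝ k).natDegree ≤ k.natAbs := by
      rw [← Polynomial.Chebyshev.T_natAbs]
      exact cheb_deg k.natAbs
    have hk' : k.natAbs ≤ 2*n - 1 := by
      simp only [hsdef, Finset.mem_Ioo] at hk
      omega
    calc (Polynomial.Chebyshev.T ℝ k).natDegree * (Polynomial.C (2:ℝ) * Polynomial.X - 1).natDegree
        ≤ k.natAbs * 1 := Nat.mul_le_mul hd2 hd1
      _ ≤ 2*n - 1 := by omega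
  have hexact : ∀ k ∈ s, ∑ i, (Q.weight i : ℂ) * (((P k).eval (Q.node i) : ℝ) : ℂ)
      = ∫ x in (0:ℝ)..1, (((P k).eval x : ℝ) : ℂ) := by
    intro k hk
    have h := Q.exact (P k) (hPdeg k hk)
    rw [intervalIntegral.integral_ofReal, ← h]
    push_cast
    rfl
  have hPcont : ∀ k : ℤ, Continuous (fun x : ℝ => c k * (((P k).eval x : ℝ) : ℂ)) := by
    intro k
    exact continuous_const.mul (Complex.continuous_ofReal.comp (P k).continuous)
  have hSPcont : Continuous SP := by
    rw [hSP]
    exact continuous_finset_sum s (fun k _ => hPcont k)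
  have hSPint : IntervalIntegrable SP volume 0 1 := hSPcont.intervalIntegrable _ _
  have hQI : (∫ x in (0:ℝ)..1, SP x) = ∑ i, (Q.weight i : ℂ) * SP (Q.node i) := by
    rw [hSP]
    rw [intervalIntegral.integral_finset_sum
      (fun k _ => ((hPcont k).intervalIntegrable _ _))]
    have h1 : ∀ k ∈ s, (∫ x in (0:ℝ)..1, c k * (((P k).eval x : ℝ) : ℂ))
        = ∑ i, (Q.weight i : ℂ) * (c k * (((P k).eval (Q.node i) : ℝ) : ℂ)) := by
      intro k hk
      rw [intervalIntegral.integral_const_mul, ← hexact k hk, Finset.mul_sum]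
      refine Finset.sum_congr rfl ?_
      intro i _
      ring
    rw [Finset.sum_congr rfl h1, Finset.sum_comm]
    refine Finset.sum_congr rfl ?_
    intro i _
    rw [Finset.mul_sum]
  -- integrability of f
  have hfcont : ContinuousOn f (Set.Icc (0:ℝ) 1) := by
    refine ContinuousOn.congr (f := fun x : ℝ => fstar (x : ℂ)) ?_ ?_
    · exact hfc.comp Complex.continuous_ofReal.continuousOn
        (fun x hx => hIρ x hx)
    · intro x hx
      exact (hagree x hx).symm
  have hfint : IntervalIntegrable f volume 0 1 := by
    apply ContinuousOn.intervalIntegrable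
    rw [Set.uIcc_of_le (zero_le_one)]
    exact hfcont
  -- weights sum to one
  have hwsum1 : ∑ i, Q.weight i = 1 := by
    have h := Q.exact 1 (by simp)
    simpa using h
  -- final assembly
  have hkey : (∫ x in (0:ℝ)..1, f x) - ∑ i, (Q.weight i : ℂ) * f (Q.node i)
      = (∫ x in (0:ℝ)..1, (f x - SP x))
        + ∑ i, (Q.weight i : ℂ) * (SP (Q.node i) - f (Q.node i)) := by
    rw [intervalIntegral.integral_sub hfint hSPint]
    have h2 : ∑ i, (Q.weight i : ℂ) * (SP (Q.node i) - f (Q.node i))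
        = (∑ i, (Q.weight i : ℂ) * SP (Q.node i)) - ∑ i, (Q.weight i : ℂ) * f (Q.node i) := by
      rw [← Finset.sum_sub_distrib]
      refine Finset.sum_congr rfl ?_
      intro i _
      ring
    rw [h2, ← hQI]
    ring
  rw [hkey]
  set A := M * (1/r)^(2*n) * (1-1/r)⁻¹ with hAdef
  have h1 : ‖∫ x in (0:ℝ)..1, (f x - SP x)‖ ≤ 2*A := by
    have := intervalIntegral.norm_integral_le_of_norm_le_const
      (f := fun x => f x - SP x) (a := 0) (b := 1) (C := 2*A) ?_
    · simpa using this
    · intro x hx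
      refine htail x ?_
      rw [Set.uIoc_of_le zero_le_one] at hx
      exact ⟨le_of_lt hx.1, hx.2⟩
  have h2 : ‖∑ i, (Q.weight i : ℂ) * (SP (Q.node i) - f (Q.node i))‖ ≤ 2*A := by
    refine le_trans (norm_sum_le _ _) ?_
    have hterm2 : ∀ i, ‖(Q.weight i : ℂ) * (SP (Q.node i) - f (Q.node i))‖
        ≤ Q.weight i * (2*A) := by
      intro i
      rw [norm_mul, Complex.norm_real, Real.norm_eq_abs, abs_of_pos (Q.weight_pos i)]
      refine mul_le_mul_of_nonneg_left ?_ (Q.weight_pos i).le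
      rw [show SP (Q.node i) - f (Q.node i) = -(f (Q.node i) - SP (Q.node i)) by ring, norm_neg]
      exact htail (Q.node i) (Q.node_mem i)
    refine le_trans (Finset.sum_le_sum (fun i _ => hterm2 i)) ?_
    rw [← Finset.sum_mul, hwsum1, one_mul]
  refine le_trans (le_trans (norm_add_le _ _) (add_le_add h1 h2)) ?_
  rw [hAdef]
  rw [show 2*(M * (1/r)^(2*n) * (1-1/r)⁻¹) + 2*(M * (1/r)^(2*n) * (1-1/r)⁻¹)
      = 4 * (1-1/r)⁻¹ * (1/r)^(2*n) * M by ring]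
end
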